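/- Let N ≥ 1, let ε₁,…,ε_N be real constants, and let r₁,…,r_N : ℝ² → ℝ be smooth functions of (x,t) with r_i(x,t) > 0 everywhere, satisfying the generalized ε-system ∂_t r_i = [r_i − Σ_{m=1}^N ε_m r_m] ∂_x r_i for every i. Define c₀ := Σ_{m=1}^N ε_m ln r_m and, for k ∈ ℤ with k ≠ 0, c_k := (1/k) Σ_{m=1}^N ε_m r_m^k. Then for every k ∈ ℤ the hydrodynamic chain ∂_t c_k = ∂_x c_{k+1} − c₁ ∂_x c_k holds. -/

import Mathlib

open Real Set

/-- Partial derivative in the first variable. -/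
noncomputable def pdx (f : ℝ → ℝ → ℝ) (x t : ℝ) : ℝ := deriv (fun x' => f x' t) x

/-- Partial derivative in the second variable. -/
noncomputable def pdt (f : ℝ → ℝ → ℝ) (x t : ℝ) : ℝ := deriv (fun t' => f x t') t

/-- Derivative of the `k`-th moment sum along a curve, `k ≠ 0`. -/
lemma mom_deriv_ne {N : ℕ} (ε : Fin N → ℝ) (k : ℤ) (hk : k ≠ 0)
    (g : ℝ → Fin N → ℝ) (g' : Fin N → ℝ) (s : ℝ)
    (hpos : ∀ m, 0 < g s m)
    (hg : ∀ m, HasDerivAt (fun u => g u m) (g' m) s) :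
    HasDerivAt (fun u => (k : ℝ)⁻¹ * ∑ m, ε m * (g u m) ^ k)
      (∑ m, ε m * (g s m) ^ (k - 1) * g' m) s := by
  have h : HasDerivAt (fun u => ∑ m, ε m * (g u m) ^ k)
      (∑ m, ε m * ((k : ℝ) * (g s m) ^ (k - 1) * g' m)) s := by
    refine HasDerivAt.fun_sum fun m _ => ?_
    have hz : HasDerivAt (fun u => (g u m) ^ k) ((k : ℝ) * (g s m) ^ (k - 1) * g' m) s :=
      by have := (hasDerivAt_zpow k (g s m) (Or.inl (hpos m).ne')).comp s (hg m); exact this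
    simpa [mul_assoc] using hz.const_mul (ε m)
  have h2 := h.const_mul ((k : ℝ)⁻¹)
  have hk' : (k : ℝ) ≠ 0 := Int.cast_ne_zero.mpr hk
  refine h2.congr_deriv ?_
  rw [Finset.mul_sum]
  refine Finset.sum_congr rfl fun m _ => ?_
  field_simp

/-- Derivative of the `0`-th moment sum along a curve. -/
lemma mom_deriv_zero {N : ℕ} (ε : Fin N → ℝ)
    (g : ℝ → Fin N → ℝ) (g' : Fin N → ℝ) (s : ℝ)
    (hpos : ∀ m, 0 < g s m)
    (hg : ∀ m, HasDerivAt (fun u => g u m) (g' m) s) :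
    HasDerivAt (fun u => ∑ m, ε m * Real.log (g u m))
      (∑ m, ε m * (g s m) ^ ((0 : ℤ) - 1) * g' m) s := by
  refine HasDerivAt.fun_sum fun m _ => ?_
  have hz : HasDerivAt (fun u => Real.log (g u m)) (g' m / g s m) s :=
    (hg m).log (hpos m).ne'
  have he : (g s m : ℝ) ^ ((0 : ℤ) - 1) = (g s m)⁻¹ := by norm_num
  rw [he]
  simpa [div_eq_mul_inv, mul_comm, mul_assoc, mul_left_comm] using hz.const_mul (ε m)

/-- For positive solutions of the generalized ε-system
`∂ₜ rᵢ = [rᵢ − Σ ε_m r_m] ∂ₓ rᵢ`, the moments `c₀ = Σ ε_m ln r_m`,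
`c_k = (1/k) Σ ε_m r_m^k` (k ≠ 0) satisfy the hydrodynamic chain
`∂ₜ c_k = ∂ₓ c_{k+1} − c₁ ∂ₓ c_k` for all `k ∈ ℤ`. -/
theorem generalized_eps_system_gives_chain
    (N : ℕ) (hN : 1 ≤ N) (ε : Fin N → ℝ)
    (r : ℝ → ℝ → Fin N → ℝ)
    (hr : ContDiff ℝ (⊤ : ℕ∞) (fun p : ℝ × ℝ => r p.1 p.2))
    (hpos : ∀ (x t : ℝ) (i : Fin N), 0 < r x t i)
    (hsys : ∀ (i : Fin N) (x t : ℝ),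
      pdt (fun x' t' => r x' t' i) x t
        = (r x t i - ∑ m, ε m * r x t m) * pdx (fun x' t' => r x' t' i) x t)
    (c : ℤ → ℝ → ℝ → ℝ)
    (hc0 : ∀ x t : ℝ, c 0 x t = ∑ m, ε m * Real.log (r x t m))
    (hck : ∀ k : ℤ, k ≠ 0 → ∀ x t : ℝ,
      c k x t = ((k : ℝ))⁻¹ * ∑ m, ε m * (r x t m) ^ k) :
    ∀ (k : ℤ) (x t : ℝ),
      pdt (c k) x t = pdx (c (k + 1)) x t - c 1 x t * pdx (c k) x t := by
  intro k x t
  have hdiff : Differentiable ℝ (fun p : ℝ × ℝ => r p.1 p.2) := hr.differentiable (by simp)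
  have hdm : ∀ m, Differentiable ℝ (fun p : ℝ × ℝ => r p.1 p.2 m) :=
    differentiable_pi.mp hdiff
  have hrt : ∀ m, HasDerivAt (fun t' => r x t' m)
      (pdt (fun x' t' => r x' t' m) x t) t := by
    intro m
    have h1 : DifferentiableAt ℝ (fun t' => r x t' m) t :=
      ((hdm m).comp ((differentiable_const x).prodMk differentiable_id)) t
    exact h1.hasDerivAt
  have hrx : ∀ m, HasDerivAt (fun x' => r x' t m)
      (pdx (fun x' t' => r x' t' m) x t) x := by
    intro m
    have h1 : DifferentiableAt ℝ (fun x' => r x' t m) x :=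
      ((hdm m).comp (differentiable_id.prodMk (differentiable_const t))) x
    exact h1.hasDerivAt
  -- t-derivative of c k
  have hpdt : ∀ k : ℤ, pdt (c k) x t
      = ∑ m, ε m * (r x t m) ^ (k - 1) * pdt (fun x' t' => r x' t' m) x t := by
    intro k
    rcases eq_or_ne k 0 with rfl | hk
    · have hfe : (fun t' => c 0 x t') = fun t' => ∑ m, ε m * Real.log (r x t' m) :=
        funext fun t' => hc0 x t'
      show deriv (fun t' => c 0 x t') t = _
      rw [hfe]
      exact (mom_deriv_zero ε (fun t' => r x t') _ t (fun m => hpos x t m) hrt).deriv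
    · have hfe : (fun t' => c k x t')
          = fun t' => (k : ℝ)⁻¹ * ∑ m, ε m * (r x t' m) ^ k :=
        funext fun t' => hck k hk x t'
      show deriv (fun t' => c k x t') t = _
      rw [hfe]
      exact (mom_deriv_ne ε k hk (fun t' => r x t') _ t (fun m => hpos x t m) hrt).deriv
  -- x-derivative of c k
  have hpdx : ∀ k : ℤ, pdx (c k) x t
      = ∑ m, ε m * (r x t m) ^ (k - 1) * pdx (fun x' t' => r x' t' m) x t := by
    intro k
    rcases eq_or_ne k 0 with rfl | hk
    · have hfe : (fun x' => c 0 x' t) = fun x' => ∑ m, ε m * Real.log (r x' t m) :=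
        funext fun x' => hc0 x' t
      show deriv (fun x' => c 0 x' t) x = _
      rw [hfe]
      exact (mom_deriv_zero ε (fun x' => r x' t) _ x (fun m => hpos x t m) hrx).deriv
    · have hfe : (fun x' => c k x' t)
          = fun x' => (k : ℝ)⁻¹ * ∑ m, ε m * (r x' t m) ^ k :=
        funext fun x' => hck k hk x' t
      show deriv (fun x' => c k x' t) x = _
      rw [hfe]
      exact (mom_deriv_ne ε k hk (fun x' => r x' t) _ x (fun m => hpos x t m) hrx).deriv
  have hc1 : c 1 x t = ∑ m, ε m * r x t m := by
    simpa using hck 1 one_ne_zero x t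
  rw [hpdt k, hpdx k, hpdx (k + 1), hc1]
  have hk1 : k + 1 - 1 = k := by ring
  rw [hk1, Finset.mul_sum, ← Finset.sum_sub_distrib]
  refine Finset.sum_congr rfl fun m _ => ?_
  rw [hsys m x t]
  have hpk : (r x t m) ^ k = (r x t m) ^ (k - 1) * r x t m := by
    rw [← zpow_add_one₀ (hpos x t m).ne' (k - 1)]
    ring_nf
  rw [hpk]
  ring
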